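/- A mechanism M with conditional densities m(·|x) is (ε, δ)-probabilistically differentially private if and only if it is (L, ℋ, ε, δ)-persuasively private, where L is the discrete negative log-probability score and ℋ is the class of two-point priors supported on neighboring pairs of datasets. That is, inf_{x∼x′} P_x[m(T|x) ≤ e^ε m(T|x′)] ≥ 1−δ holds if and only if inf_{x∈X} inf_{Q∈ℋ} P_x[−log Q({x}) + log Q({x}|T) ≤ ε] ≥ 1−δ. -/

import Mathlib

open MeasureTheory

/-- The mechanism `M(x,·)` given by the density `m(·|x)` with respect to the common
dominating measure `ν`: so `P_x = M(x,·) = ν.withDensity (m(·|x))`. -/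
noncomputable def mech {X T : Type*} [MeasurableSpace T] (ν : Measure T)
    (m : X → T → ℝ) (x : X) : Measure T :=
  ν.withDensity fun t => ENNReal.ofReal (m x t)

/-- The relative negative log-probability privacy score `Δ_L(Q,t,x) = L(Q,x) − L(Q_t,x)` for
the two-point prior `Q = w δ_z + (1−w) δ_{z′}`: it equals
`log m(t|x) − log (w m(t|z) + (1−w) m(t|z′))` when `x ∈ {z, z′}` and `0` otherwise
(the latter also encoding the convention `−∞ − (−∞) = 0`). -/
noncomputable def relScore {X T : Type*} [DecidableEq X] (m : X → T → ℝ)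
    (x z z' : X) (w : ℝ) (t : T) : ℝ :=
  if x = z ∨ x = z' then
    Real.log (m x t) - Real.log (w * m z t + (1 - w) * m z' t)
  else 0

private lemma logcore {ε a c : ℝ} (ha : 0 < a) (hc : Real.exp (-ε) * a ≤ c) :
    Real.log a - Real.log c ≤ ε := by
  have hc0 : 0 < c := lt_of_lt_of_le (by positivity) hc
  have h1 : a ≤ Real.exp ε * c := by
    have := mul_le_mul_of_nonneg_left hc (Real.exp_pos ε).le
    rw [← mul_assoc, ← Real.exp_add] at this
    simpa using this
  have h2 : Real.log a ≤ Real.log (Real.exp ε * c) :=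
    Real.log_le_log (by positivity) h1
  rw [Real.log_mul (Real.exp_ne_zero _) hc0.ne', Real.log_exp] at h2
  linarith

private lemma logcore' {ε a c : ℝ} (ha : 0 < a) (hc0 : 0 < c)
    (h : Real.log a - Real.log c ≤ ε) : Real.exp (-ε) * a ≤ c := by
  have h2 : Real.log a ≤ Real.log (Real.exp ε * c) := by
    rw [Real.log_mul (Real.exp_ne_zero _) hc0.ne', Real.log_exp]; linarith
  have h3 : a ≤ Real.exp ε * c := (Real.log_le_log_iff ha (by positivity)).mp h2
  have := mul_le_mul_of_nonneg_left h3 (Real.exp_pos (-ε)).le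
  rw [← mul_assoc, ← Real.exp_add] at this
  simpa using this

private lemma cvx1 {ε w a b : ℝ} (hε : 0 < ε) (hw0 : 0 < w) (hw1 : w < 1)
    (ha : 0 < a) (hb : 0 ≤ b) (hab : a ≤ Real.exp ε * b) :
    Real.exp (-ε) * a ≤ w * a + (1 - w) * b := by
  have he : Real.exp (-ε) * a ≤ b := by
    have := mul_le_mul_of_nonneg_left hab (Real.exp_pos (-ε)).le
    rw [← mul_assoc, ← Real.exp_add] at this
    simpa using this
  have h1 : Real.exp (-ε) ≤ 1 := Real.exp_le_one_iff.mpr (by linarith)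
  nlinarith [mul_nonneg (mul_nonneg hw0.le ha.le) (sub_nonneg.mpr h1),
    mul_le_mul_of_nonneg_left he (by linarith : (0:ℝ) ≤ 1 - w)]

private lemma cvx2 {ε w a b : ℝ} (hε : 0 < ε) (hw0 : 0 < w) (hw1 : w < 1)
    (ha : 0 < a) (hb : 0 ≤ b) (hab : a ≤ Real.exp ε * b) :
    Real.exp (-ε) * a ≤ w * b + (1 - w) * a := by
  have he : Real.exp (-ε) * a ≤ b := by
    have := mul_le_mul_of_nonneg_left hab (Real.exp_pos (-ε)).le
    rw [← mul_assoc, ← Real.exp_add] at this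
    simpa using this
  have h1 : Real.exp (-ε) ≤ 1 := Real.exp_le_one_iff.mpr (by linarith)
  nlinarith [mul_le_mul_of_nonneg_left he hw0.le,
    mul_nonneg (mul_nonneg (by linarith : (0:ℝ) ≤ 1 - w) ha.le) (sub_nonneg.mpr h1)]

private lemma mech_mono_pos {X T : Type*} [MeasurableSpace T] (ν : Measure T)
    (m : X → T → ℝ) (hm : ∀ x, Measurable (m x)) (x : X) (S : Set T) :
    mech ν m x S ≤ mech ν m x (S ∩ {t | 0 < m x t}) := by
  have hZ : MeasurableSet {t | m x t ≤ 0} := measurableSet_le (hm x) measurable_const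
  have h0 : mech ν m x {t | m x t ≤ 0} = 0 := by
    rw [mech, withDensity_apply _ hZ]
    calc ∫⁻ t in {t | m x t ≤ 0}, ENNReal.ofReal (m x t) ∂ν
        = ∫⁻ t in {t | m x t ≤ 0}, 0 ∂ν := by
          refine setLIntegral_congr_fun hZ (fun t ht => ?_)
          simpa [ENNReal.ofReal_eq_zero] using ht
      _ = 0 := lintegral_zero
  calc mech ν m x S
      ≤ mech ν m x ((S ∩ {t | 0 < m x t}) ∪ {t | m x t ≤ 0}) := by
        refine measure_mono fun t ht => ?_
        rcases lt_or_ge 0 (m x t) with h | h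
        · exact Or.inl ⟨ht, h⟩
        · exact Or.inr h
    _ ≤ mech ν m x (S ∩ {t | 0 < m x t}) + mech ν m x {t | m x t ≤ 0} :=
        measure_union_le _ _
    _ = mech ν m x (S ∩ {t | 0 < m x t}) := by rw [h0, add_zero]

/-- a mechanism with densities `m(·|x)` is `(ε,δ)`-probabilistically
differentially private iff it is `(L, ℋ, ε, δ)`-persuasively private, where `L` is the discrete
negative log-probability score and `ℋ` is the class of two-point priors `w δ_z + (1−w) δ_{z′}`,
`w ∈ (0,1)`, supported on neighbouring pairs `z ∼ z′`. -/
theorem stmt8 {X T : Type*} [DecidableEq X] [MeasurableSpace T] (ν : Measure T)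
    (N : X → X → Prop) (hN : Symmetric N)
    (m : X → T → ℝ) (hm : ∀ x, Measurable (m x)) (hmnn : ∀ x t, 0 ≤ m x t)
    (hprob : ∀ x, IsProbabilityMeasure (mech ν m x))
    (ε δ : ℝ) (hε : 0 < ε) (hδ : 0 ≤ δ) (hδ1 : δ ≤ 1) :
    (∀ x x', N x x' →
        mech ν m x {t | m x t ≤ Real.exp ε * m x' t} ≥ ENNReal.ofReal (1 - δ)) ↔
    (∀ x z z', N z z' → ∀ w ∈ Set.Ioo (0:ℝ) 1,
        mech ν m x {t | relScore m x z z' w t ≤ ε} ≥ ENNReal.ofReal (1 - δ)) := by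
  constructor
  · intro h x z z' hzz' w hw
    obtain ⟨hw0, hw1⟩ := hw
    by_cases hxz : x = z
    · subst hxz
      refine le_trans (le_trans (h x z' hzz') (mech_mono_pos ν m hm x _)) (measure_mono ?_)
      rintro t ⟨ht, hpos⟩
      simp only [Set.mem_setOf_eq] at ht hpos ⊢
      have : relScore m x x z' w t =
          Real.log (m x t) - Real.log (w * m x t + (1 - w) * m z' t) := by
        rw [relScore, if_pos (Or.inl rfl)]
      rw [this]
      exact logcore hpos (cvx1 hε hw0 hw1 hpos (hmnn z' t) ht)
    · by_cases hxz' : x = z'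
      · subst hxz'
        refine le_trans (le_trans (h x z (hN hzz')) (mech_mono_pos ν m hm x _))
          (measure_mono ?_)
        rintro t ⟨ht, hpos⟩
        simp only [Set.mem_setOf_eq] at ht hpos ⊢
        have : relScore m x z x w t =
            Real.log (m x t) - Real.log (w * m z t + (1 - w) * m x t) := by
          rw [relScore, if_pos (Or.inr rfl)]
        rw [this]
        exact logcore hpos (cvx2 hε hw0 hw1 hpos (hmnn z t) ht)
      · have hset : {t | relScore m x z z' w t ≤ ε} = Set.univ := by
          ext t
          simp only [Set.mem_setOf_eq, Set.mem_univ, iff_true]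
          rw [relScore, if_neg (by tauto)]
          exact hε.le
        rw [hset]
        haveI := hprob x
        rw [measure_univ]
        exact ENNReal.ofReal_le_one.mpr (by linarith)
  · intro h x x' hxx'
    haveI := hprob x
    set w : ℕ → ℝ := fun n => 1 / ((n : ℝ) + 2) with hwdef
    have hw : ∀ n, w n ∈ Set.Ioo (0:ℝ) 1 := fun n =>
      ⟨by positivity, by
        rw [hwdef]
        rw [div_lt_one (by positivity)]
        have : (0:ℝ) ≤ (n:ℝ) := Nat.cast_nonneg n
        linarith⟩
    set A : ℕ → Set T := fun n =>
      {t | 0 < m x t} ∩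
      {t | Real.exp (-ε) * m x t ≤ w n * m x t + (1 - w n) * m x' t} with hAdef
    have hAmeas : ∀ n, MeasurableSet (A n) := fun n =>
      (measurableSet_lt measurable_const (hm x)).inter
        (measurableSet_le ((hm x).const_mul _)
          (((hm x).const_mul _).add ((hm x').const_mul _)))
    have hanti : Antitone A := by
      intro i j hij t ht
      obtain ⟨hpos, hle⟩ := ht
      have hpos' : (0:ℝ) < m x t := hpos
      have hle' : Real.exp (-ε) * m x t ≤ w j * m x t + (1 - w j) * m x' t := hle
      refine ⟨hpos, ?_⟩
      have hwij : w j ≤ w i := by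
        rw [hwdef]
        have hc : (i:ℝ) + 2 ≤ (j:ℝ) + 2 := by
          have := (Nat.cast_le (α := ℝ)).mpr hij
          linarith
        exact one_div_le_one_div_of_le (by positivity) hc
      show Real.exp (-ε) * m x t ≤ w i * m x t + (1 - w i) * m x' t
      rcases le_or_gt (m x t) (m x' t) with hab | hab
      · have h1 : Real.exp (-ε) ≤ 1 := Real.exp_le_one_iff.mpr (by linarith)
        nlinarith [mul_nonneg (sub_nonneg.mpr (hw i).2.le) (sub_nonneg.mpr hab),
          mul_nonneg (sub_nonneg.mpr h1) hpos'.le]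
      · nlinarith [mul_le_mul_of_nonneg_right hwij (le_of_lt (sub_pos.mpr hab))]
    have hA : ∀ n, ENNReal.ofReal (1 - δ) ≤ mech ν m x (A n) := by
      intro n
      have h1 := h x x x' hxx' (w n) (hw n)
      refine le_trans (le_trans h1 (mech_mono_pos ν m hm x _)) (measure_mono ?_)
      rintro t ⟨ht, hpos⟩
      simp only [Set.mem_setOf_eq] at ht hpos
      refine ⟨hpos, ?_⟩
      have hrel : relScore m x x x' (w n) t =
          Real.log (m x t) - Real.log (w n * m x t + (1 - w n) * m x' t) := by
        rw [relScore, if_pos (Or.inl rfl)]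
      rw [hrel] at ht
      have hc : 0 < w n * m x t + (1 - w n) * m x' t := by
        nlinarith [(hw n).1, (hw n).2, hmnn x' t, hpos]
      exact logcore' hpos hc ht
    have hincl : (⋂ n, A n) ⊆ {t | m x t ≤ Real.exp ε * m x' t} := by
      intro t ht
      simp only [Set.mem_iInter] at ht
      have hpos : 0 < m x t := (ht 0).1
      simp only [Set.mem_setOf_eq]
      by_contra hcon
      push_neg at hcon
      have hd : 0 < Real.exp (-ε) * m x t - m x' t := by
        have := mul_lt_mul_of_pos_left hcon (Real.exp_pos (-ε))
        rw [← mul_assoc, ← Real.exp_add] at this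
        simp only [neg_add_cancel, Real.exp_zero, one_mul] at this
        linarith
      set d := Real.exp (-ε) * m x t - m x' t with hddef
      obtain ⟨n, hn⟩ := exists_nat_gt (m x t / d)
      have h2 : Real.exp (-ε) * m x t ≤ w n * m x t + (1 - w n) * m x' t := (ht n).2
      have hb : 0 ≤ m x' t := hmnn x' t
      have h3 : d ≤ w n * m x t := by
        nlinarith [mul_nonneg (hw n).1.le hb]
      have h5 : w n * m x t < d := by
        have hwn : w n * m x t = m x t / ((n:ℝ) + 2) := by
          rw [hwdef]; ring
        rw [hwn, div_lt_iff₀ (by positivity)]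
        rw [div_lt_iff₀ hd] at hn
        nlinarith [hd]
      linarith
    have hlim :
        Filter.Tendsto (fun n => mech ν m x (A n)) Filter.atTop
          (nhds (mech ν m x (⋂ n, A n))) :=
      tendsto_measure_iInter_atTop (fun n => (hAmeas n).nullMeasurableSet) hanti ⟨0, measure_ne_top _ _⟩
    have hfin : ENNReal.ofReal (1 - δ) ≤ mech ν m x (⋂ n, A n) :=
      ge_of_tendsto hlim (Filter.Eventually.of_forall hA)
    exact le_trans hfin (measure_mono hincl)
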